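/- (Background predicted only on the negative orthant) Fix n ≥ 1 and v ∈ ℝ^n. If the implicit background component strictly dominates every in-distribution component, i.e., −logsumexp(v) > v_i for every index i, then every in-distribution component is strictly negative: v_i < 0 for all i. Hence under implicit background estimation the background class can be predicted only when all in-distribution logits lie in the negative orthant of ℝ^n. -/
import Mathlib

/-- `logsumexp(v) = log(Σ_j exp(v_j))`. -/
noncomputable def logsumexp {n : ℕ} (v : Fin n → ℝ) : ℝ :=
  Real.log (∑ j, Real.exp (v j))

/-- (Background predicted only on the negative orthant) If the implicit background
component strictly dominates every in-distribution component, i.e.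
`−logsumexp(v) > v_i` for every `i`, then every in-distribution component is strictly
negative: `v_i < 0` for all `i`. -/
theorem background_predicted_only_on_negative_orthant {n : ℕ} (hn : 1 ≤ n)
    (v : Fin n → ℝ) (h : ∀ i, -logsumexp v > v i) : ∀ i, v i < 0 := by
  intro i
  have hle : Real.exp (v i) ≤ ∑ j, Real.exp (v j) :=
    Finset.single_le_sum (fun j _ => (Real.exp_pos (v j)).le) (Finset.mem_univ i)
  have hvi : v i ≤ logsumexp v := by
    have := Real.log_le_log (Real.exp_pos (v i)) hle
    simpa [logsumexp, Real.log_exp] using this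
  have := h i
  linarith
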